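/- Let n ≥ 2, s ≤ n, and r₁,…,r_s positive integers with Σ r_j = n. Let A(r₁,…,r_s) = {α^1,…,α^N} with N = ∏(r_j+1) − 1 be the nonzero multi-indices α with 0 ≤ α_j ≤ r_j, and for x ∈ ℂ^N define R_x(z) = 1 + Σ_{j=1}^N (−1)^{|α^j|} x_j z^{α^j} for z ∈ ℂ^s. Then the generalized tetrablock 𝔼_E := { x ∈ ℂ^N : R_x(z) ≠ 0 for all z in the closed polydisc 𝔻̄^s } is an (|α^1|,…,|α^N|)-balanced open set: if x ∈ 𝔼_E and λ ∈ 𝔻̄, then (λ^{|α^1|} x₁, …, λ^{|α^N|} x_N) ∈ 𝔼_E. -/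

import Mathlib

open Set Finset
set_option maxHeartbeats 1000000

/-- The set `A(r₁,…,r_s)` of nonzero multi-indices `α` with `0 ≤ α_j ≤ r_j`. -/
def idxSet (s : ℕ) (r : Fin s → ℕ) : Finset (Fin s → ℕ) :=
  (Fintype.piFinset fun j => Finset.range (r j + 1)).erase 0

/-- The polynomial `R_x(z) = 1 + Σ_{α ∈ A} (−1)^{|α|} x_α z^α`. -/
noncomputable def tetraR (s : ℕ) (r : Fin s → ℕ) (x : idxSet s r → ℂ) (z : Fin s → ℂ) : ℂ :=
  1 + ∑ α : idxSet s r, (-1 : ℂ) ^ (∑ j, (α : Fin s → ℕ) j) * x α *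
    ∏ j, z j ^ (α : Fin s → ℕ) j

/-- The generalized tetrablock `𝔼_E = {x ∈ ℂ^N : R_x(z) ≠ 0 ∀ z ∈ 𝔻̄^s}`. -/
noncomputable def genTetrablock (s : ℕ) (r : Fin s → ℕ) : Set (idxSet s r → ℂ) :=
  {x | ∀ z : Fin s → ℂ, (∀ j, ‖z j‖ ≤ 1) → tetraR s r x z ≠ 0}

lemma tetraR_continuous (s : ℕ) (r : Fin s → ℕ) :
    Continuous (fun p : (idxSet s r → ℂ) × (Fin s → ℂ) => tetraR s r p.1 p.2) := by
  unfold tetraR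
  apply Continuous.add continuous_const
  apply continuous_finset_sum
  intro α _
  apply Continuous.mul
  · exact continuous_const.mul ((continuous_apply α).comp continuous_fst)
  · apply continuous_finset_prod
    intro j _
    exact ((continuous_apply j).comp continuous_snd).pow _

/-- The generalized tetrablock is an `(|α^1|,…,|α^N|)`-balanced open set. -/
theorem genTetrablock_isOpen_and_quasibalanced
    (n s : ℕ) (hn : 2 ≤ n) (hs : s ≤ n) (r : Fin s → ℕ) (hr : ∀ j, 1 ≤ r j)
    (hsum : ∑ j, r j = n) :
    IsOpen (genTetrablock s r) ∧
    ∀ x ∈ genTetrablock s r, ∀ lam : ℂ, ‖lam‖ ≤ 1 →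
      (fun α : idxSet s r => lam ^ (∑ j, (α : Fin s → ℕ) j) * x α) ∈ genTetrablock s r := by
  constructor
  · -- openness
    set K : Set (Fin s → ℂ) := {z | ∀ j, ‖z j‖ ≤ 1} with hK
    have hKc : IsCompact K := by
      have : K = Set.pi Set.univ (fun _ => Metric.closedBall (0 : ℂ) 1) := by
        ext z
        simp [hK, Complex.dist_eq]
      rw [this]
      exact isCompact_univ_pi fun _ => isCompact_closedBall _ _
    haveI : CompactSpace K := isCompact_iff_compactSpace.mp hKc
    have hset : genTetrablock s r =
        (Prod.fst '' {p : (idxSet s r → ℂ) × K | tetraR s r p.1 p.2 = 0})ᶜ := by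
      ext x
      simp only [genTetrablock, Set.mem_setOf_eq, Set.mem_compl_iff, Set.mem_image,
        Prod.exists, Subtype.exists]
      constructor
      · rintro h ⟨a, z, hz, h0, rfl⟩
        exact h z hz h0
      · intro h z hz h0
        exact h ⟨x, z, hz, h0, rfl⟩
    rw [hset]
    have hcont : Continuous fun p : (idxSet s r → ℂ) × K => tetraR s r p.1 p.2 :=
      (tetraR_continuous s r).comp
        (continuous_fst.prodMk (continuous_subtype_val.comp continuous_snd))
    have hclosed : IsClosed {p : (idxSet s r → ℂ) × K | tetraR s r p.1 p.2 = 0} :=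
      isClosed_eq hcont continuous_const
    exact (isClosedMap_fst_of_compactSpace _ hclosed).isOpen_compl
  · intro x hx lam hlam z hz
    have hz' : ∀ j, ‖lam * z j‖ ≤ 1 := by
      intro j
      rw [norm_mul]
      exact mul_le_one₀ hlam (norm_nonneg _) (hz j)
    have key : tetraR s r (fun α => lam ^ (∑ j, (α : Fin s → ℕ) j) * x α) z =
        tetraR s r x (fun j => lam * z j) := by
      unfold tetraR
      congr 1
      apply Finset.sum_congr rfl
      intro α _
      simp only [mul_pow, Finset.prod_mul_distrib, Finset.prod_pow_eq_pow_sum]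
      ring
    rw [key]
    exact hx _ hz'
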